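/- Let n ≥ 3, k an integer with 1 < k < n/2, and nk/(n-2k) < p < (n+2)k/(n-2k). If u is a regular solution of the initial value problem -(1/k)·C(n-1,k-1)·(r^{n-k}|u'|^{k-1}u')' = r^{n-1}u^p, u > 0, u'(0) = 0, u(0) = ρ > 0, then both integrals ∫_0^∞ r^{n-k}|u'|^{k+1} dr and ∫_0^∞ r^{n-1}u^{p+1} dr are finite and satisfy the energy identity ∫_0^∞ r^{n-k}|u'|^{k+1} dr = (k/C(n-1,k-1))·∫_0^∞ r^{n-1}u^{p+1} dr. -/

import Mathlib

open MeasureTheory Real Set Filter Asymptotics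

noncomputable section

namespace KHessianPaper

/-- The binomial coefficient `C(n-1, k-1)` as a real number. -/
def binomC (n k : ℕ) : ℝ := ((n - 1).choose (k - 1) : ℝ)

/-- The flux `w(r) = r^{n-k} |u'(r)|^{k-1} u'(r)`. -/
def flux (n k : ℕ) (u : ℝ → ℝ) (r : ℝ) : ℝ :=
  r ^ (n - k) * |deriv u r| ^ (k - 1) * deriv u r

/-- `u` is a regular solution of the radial `k`-Hessian initial value problem
`-(1/k) C(n-1,k-1) (r^{n-k} |u'|^{k-1} u')' = r^{n-1} u^p`, `u > 0`, `u'(0) = 0`, `u(0) = ρ`. -/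
structure IsRegularSolution (n k : ℕ) (p ρ : ℝ) (u : ℝ → ℝ) : Prop where
  contDiffOn : ContDiffOn ℝ 1 u (Ici 0)
  deriv_zero : derivWithin u (Ici 0) 0 = 0
  init : u 0 = ρ
  pos : ∀ r : ℝ, 0 ≤ r → 0 < u r
  eqn : ∀ r : ℝ, 0 < r →
    HasDerivAt (flux n k u) (-((k : ℝ) / binomC n k) * r ^ (n - 1) * u r ^ p) r
  radial_smooth : ContDiff ℝ 2 (fun x : EuclideanSpace ℝ (Fin n) => -u ‖x‖)

/-- `φ : [0,∞) → ℝ` is the radial profile of a smooth compactly supported function on `ℝⁿ`. -/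
def MemWStar (n : ℕ) (φ : ℝ → ℝ) : Prop :=
  ∃ Φ : EuclideanSpace ℝ (Fin n) → ℝ,
    ContDiff ℝ (⊤ : ℕ∞) Φ ∧ HasCompactSupport Φ ∧ ∀ x, Φ x = φ ‖x‖

/-- The weak form of the equation tested against `φ`. -/
def WeakEqn (n k : ℕ) (p : ℝ) (u φ : ℝ → ℝ) : Prop :=
  ∫ r in Ioi (0 : ℝ),
      ((1 / (k : ℝ)) * binomC n k * r ^ (n - k) * |deriv u r| ^ (k - 1) * deriv u r
          * deriv φ r
        - r ^ (n - 1) * u r ^ p * φ r) = 0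

/-- The second-variation quadratic form `Q_u(φ)`. -/
def Qform (n k : ℕ) (p : ℝ) (u φ : ℝ → ℝ) : ℝ :=
  binomC n k * ∫ r in Ioi (0 : ℝ), r ^ (n - k) * |deriv u r| ^ (k - 1) * (deriv φ r) ^ 2
    - p * ∫ r in Ioi (0 : ℝ), r ^ (n - 1) * u r ^ (p - 1) * (φ r) ^ 2

/-- `u` is a positive stable solution of the radial `k`-Hessian equation. -/
def IsStableSolution (n k : ℕ) (p : ℝ) (u : ℝ → ℝ) : Prop :=
  (∀ r : ℝ, 0 < r → 0 < u r) ∧ ContDiffOn ℝ 1 u (Ioi 0) ∧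
  (∀ φ, MemWStar n φ → WeakEqn n k p u φ) ∧
  (∀ φ, MemWStar n φ → 0 ≤ Qform n k p u φ)

/-- `u` is a positive stable solution on `(R,∞)` of the radial `k`-Hessian equation. -/
def IsStableSolutionOn (n k : ℕ) (p : ℝ) (R : ℝ) (u : ℝ → ℝ) : Prop :=
  (∀ r : ℝ, 0 < r → 0 < u r) ∧ ContDiffOn ℝ 1 u (Ioi 0) ∧
  (∀ φ, MemWStar n φ → WeakEqn n k p u φ) ∧
  (∀ φ : ℝ → ℝ, ContDiff ℝ (⊤ : ℕ∞) φ → HasCompactSupport φ → tsupport φ ⊆ Ioi R →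
    0 ≤ Qform n k p u φ)

/-- The constant `A` in the singular solution `u_s(r) = A r^{-2k/(p-k)}`. -/
def Aconst (n k : ℕ) (p : ℝ) : ℝ :=
  ((1 / (k : ℝ)) * binomC n k) ^ (1 / (p - k))
    * (2 * (k : ℝ) / (p - (k : ℝ))) ^ ((k : ℝ) / (p - k))
    * ((n : ℝ) - 2 * p * k / (p - k)) ^ (1 / (p - k))

/-- The singular solution `u_s(r) = A r^{-2k/(p-k)}`. -/
def uSing (n k : ℕ) (p : ℝ) (r : ℝ) : ℝ := Aconst n k p * r ^ (-(2 * (k : ℝ) / (p - k)))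

/-- The Joseph–Lundgren exponent (finite form, relevant when `n > 2k+8`). -/
def pJL (n k : ℕ) : ℝ :=
  ((k : ℝ) * ((n : ℝ) ^ 2 - 2 * ((k : ℝ) + 3) * (n : ℝ) + 4 * (k : ℝ))
      + 4 * (k : ℝ) * Real.sqrt (2 * ((k : ℝ) + 1) * (n : ℝ) - 4 * (k : ℝ)))
    / (((n : ℝ) - 2 * (k : ℝ)) * ((n : ℝ) - 2 * (k : ℝ) - 8))

/-- The exponent `p* = k(n+2k)/(n-2k)`. -/
def pStar (n k : ℕ) : ℝ := (k : ℝ) * ((n : ℝ) + 2 * (k : ℝ)) / ((n : ℝ) - 2 * (k : ℝ))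

open Topology

variable {n k : ℕ} {p ρ : ℝ} {u : ℝ → ℝ}

lemma aux_binomC_pos (hk1 : 1 < k) (hk2 : 2 * k < n) : 0 < binomC n k := by
  have h : k - 1 ≤ n - 1 := by omega
  unfold binomC
  exact_mod_cast Nat.choose_pos h

lemma aux_c_pos (hk1 : 1 < k) (hk2 : 2 * k < n) : 0 < (k : ℝ) / binomC n k := by
  apply div_pos _ (aux_binomC_pos hk1 hk2)
  exact_mod_cast Nat.lt_of_lt_of_le Nat.zero_lt_one hk1.le

lemma aux_u_cont (hu : IsRegularSolution n k p ρ u) : ContinuousOn u (Ici 0) :=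
  hu.contDiffOn.continuousOn

lemma aux_v_cont (hu : IsRegularSolution n k p ρ u) :
    ContinuousOn (derivWithin u (Ici 0)) (Ici 0) :=
  hu.contDiffOn.continuousOn_derivWithin (uniqueDiffOn_Ici 0) le_rfl

lemma aux_deriv_eq {r : ℝ} (hr : 0 < r) : deriv u r = derivWithin u (Ici 0) r :=
  (derivWithin_of_mem_nhds (Ici_mem_nhds hr)).symm

lemma aux_u_diffAt (hu : IsRegularSolution n k p ρ u) {r : ℝ} (hr : 0 < r) :
    DifferentiableAt ℝ u r :=
  ((hu.contDiffOn.contDiffAt (Ici_mem_nhds hr)).differentiableAt one_ne_zero)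

lemma aux_u_hasDeriv (hu : IsRegularSolution n k p ρ u) {r : ℝ} (hr : 0 < r) :
    HasDerivAt u (deriv u r) r :=
  (aux_u_diffAt hu hr).hasDerivAt

lemma aux_flux_eq_v (hk1 : 1 < k) (hk2 : 2 * k < n) :
    ∀ r ∈ Ici (0:ℝ), flux n k u r
      = r ^ (n - k) * |derivWithin u (Ici 0) r| ^ (k - 1) * derivWithin u (Ici 0) r := by
  intro r hr
  rcases eq_or_lt_of_le (mem_Ici.mp hr) with h | h
  · have hnk : n - k ≠ 0 := by omega
    rw [flux, ← h, zero_pow hnk, zero_mul, zero_mul, zero_mul, zero_mul]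
  · rw [flux, aux_deriv_eq h]

lemma aux_flux_cont (hu : IsRegularSolution n k p ρ u) (hk1 : 1 < k) (hk2 : 2 * k < n) :
    ContinuousOn (flux n k u) (Ici 0) := by
  have h : ContinuousOn (fun r => r ^ (n - k) * |derivWithin u (Ici 0) r| ^ (k - 1)
      * derivWithin u (Ici 0) r) (Ici 0) :=
    (((continuous_pow (n-k)).continuousOn.mul ((aux_v_cont hu).abs.pow _)).mul (aux_v_cont hu))
  exact h.congr (aux_flux_eq_v hk1 hk2)

lemma aux_g2_cont (hu : IsRegularSolution n k p ρ u) {q : ℝ} :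
    ContinuousOn (fun t : ℝ => t ^ (n - 1) * u t ^ q) (Ici 0) :=
  (continuous_pow (n-1)).continuousOn.mul
    ((aux_u_cont hu).rpow_const (fun x hx => Or.inl (hu.pos x hx).ne'))
lemma aux_g2_sm (hu : IsRegularSolution n k p ρ u) {q : ℝ} {l : Filter ℝ}
    (hl : Ici (0:ℝ) ∈ l) :
    StronglyMeasurableAtFilter (fun t : ℝ => t ^ (n - 1) * u t ^ q) l :=
  AEStronglyMeasurable.stronglyMeasurableAtFilter_of_mem
    ((aux_g2_cont hu).aestronglyMeasurable measurableSet_Ici) hl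

lemma aux_g2_intInt (hu : IsRegularSolution n k p ρ u) {q a b : ℝ}
    (ha : 0 ≤ a) (hb : 0 ≤ b) :
    IntervalIntegrable (fun t : ℝ => t ^ (n - 1) * u t ^ q) volume a b :=
  ((aux_g2_cont hu (q := q)).mono (fun x hx => le_trans (le_inf ha hb) hx.1)).intervalIntegrable

lemma aux_flux_deriv_zero (hu : IsRegularSolution n k p ρ u) (hk1 : 1 < k) (hk2 : 2 * k < n) :
    HasDerivWithinAt (flux n k u) 0 (Ici 0) 0 := by
  rw [hasDerivWithinAt_iff_tendsto_slope, Ici_sdiff_left]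
  set v := derivWithin u (Ici 0) with hv
  have hS : ContinuousWithinAt
      (fun x : ℝ => x ^ (n - k - 1) * |v x| ^ (k - 1) * v x) (Ioi 0) 0 := by
    have := ((((continuous_pow (n-k-1)).continuousOn.mul
        ((aux_v_cont hu).abs.pow (k-1))).mul (aux_v_cont hu)).continuousWithinAt
        (self_mem_Ici)).mono Ioi_subset_Ici_self
    exact this
  have htend := hS.tendsto
  have hS0 : (0:ℝ) ^ (n - k - 1) * |v 0| ^ (k - 1) * v 0 = 0 := by
    have hnk : n - k - 1 ≠ 0 := by omega
    simp [zero_pow hnk]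
  rw [hS0] at htend
  refine htend.congr' ?_
  filter_upwards [self_mem_nhdsWithin] with x (hx : 0 < x)
  have hfl0 : flux n k u 0 = 0 := by
    have hnk : n - k ≠ 0 := by omega
    simp [flux, zero_pow hnk]
  rw [slope_def_field, hfl0, sub_zero, sub_zero, flux, aux_deriv_eq hx, ← hv]
  have hpow : x ^ (n - k) = x ^ (n - k - 1) * x := by
    rw [← pow_succ]
    congr 1
    omega
  field_simp [hpow]
  rw [hpow]
  ring

lemma aux_flux_formula (hu : IsRegularSolution n k p ρ u) (hk1 : 1 < k) (hk2 : 2 * k < n) :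
    ∀ r : ℝ, 0 ≤ r → flux n k u r
      = -((k : ℝ) / binomC n k) * ∫ t in (0:ℝ)..r, t ^ (n - 1) * u t ^ p := by
  intro r hr
  set c : ℝ := (k : ℝ) / binomC n k with hc
  set g : ℝ → ℝ := fun t => t ^ (n - 1) * u t ^ p with hg
  set G : ℝ → ℝ := fun x => flux n k u x + c * ∫ t in (0:ℝ)..x, g t with hG
  have key : ∀ x ∈ Icc (0:ℝ) r, G x = G 0 := by
    apply constant_of_has_deriv_right_zero
    · apply ContinuousOn.add
      · exact (aux_flux_cont hu hk1 hk2).mono (Icc_subset_Ici_self)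
      · have hInt : IntegrableOn g (uIcc 0 r) := by
          refine ((aux_g2_cont hu).mono ?_).integrableOn_compact isCompact_uIcc
          exact fun x hx => le_trans (le_inf le_rfl hr) hx.1
        have := (intervalIntegral.continuousOn_primitive_interval hInt)
        rw [uIcc_of_le hr] at this
        exact continuousOn_const.mul this
    · intro x hx
      rcases eq_or_lt_of_le hx.1 with h0 | h0
      · -- x = 0
        subst h0
        have h1 : HasDerivWithinAt (fun x : ℝ => ∫ t in (0:ℝ)..x, g t) (g 0) (Ici 0) 0 := by
          apply intervalIntegral.integral_hasDerivWithinAt_right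
            (aux_g2_intInt hu le_rfl le_rfl)
            (aux_g2_sm hu (mem_of_superset self_mem_nhdsWithin Ioi_subset_Ici_self))
          exact ((aux_g2_cont hu).continuousWithinAt self_mem_Ici).mono Ioi_subset_Ici_self
        have hg0 : g 0 = 0 := by
          have : n - 1 ≠ 0 := by omega
          simp [hg, zero_pow this]
        rw [hg0] at h1
        have h3 := (aux_flux_deriv_zero hu hk1 hk2).add ((h1.const_mul c))
        simp only [mul_zero, add_zero] at h3
        exact h3
      · -- x > 0
        have h1 : HasDerivAt (fun x : ℝ => ∫ t in (0:ℝ)..x, g t) (g x) x := by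
          apply intervalIntegral.integral_hasDerivAt_right
            (aux_g2_intInt hu le_rfl h0.le) (aux_g2_sm hu (Ici_mem_nhds h0))
          exact (aux_g2_cont hu).continuousAt (Ici_mem_nhds h0)
        have h2 := (hu.eqn x h0).add ((h1.const_mul c))
        have heq : -c * x ^ (n-1) * u x ^ p + c * g x = 0 := by simp [hg]; ring
        rw [heq] at h2
        exact h2.hasDerivWithinAt.mono (Ici_subset_Ici.mpr hx.1)
  have h0 : G 0 = 0 := by
    have hnk : n - k ≠ 0 := by omega
    simp [hG, flux, zero_pow hnk]
  have hGr : flux n k u r + c * ∫ t in (0:ℝ)..r, g t = 0 :=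
    (key r ⟨hr, le_rfl⟩).trans h0
  have : flux n k u r = -(c * ∫ t in (0:ℝ)..r, g t) := by linarith
  rw [this, hc, hg]
  ring
lemma aux_F_pos (hu : IsRegularSolution n k p ρ u) {r : ℝ} (hr : 0 < r) :
    0 < ∫ t in (0:ℝ)..r, t ^ (n - 1) * u t ^ p := by
  apply intervalIntegral.intervalIntegral_pos_of_pos_on (aux_g2_intInt hu le_rfl hr.le) _ hr
  intro x hx
  have hx0 : 0 < x := hx.1
  exact mul_pos (pow_pos hx0 _) (Real.rpow_pos_of_pos (hu.pos x hx0.le) _)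

lemma aux_flux_neg (hu : IsRegularSolution n k p ρ u) (hk1 : 1 < k) (hk2 : 2 * k < n)
    {r : ℝ} (hr : 0 < r) : flux n k u r < 0 := by
  rw [aux_flux_formula hu hk1 hk2 r hr.le]
  have := mul_pos (aux_c_pos hk1 hk2) (aux_F_pos hu hr)
  linarith

lemma aux_deriv_neg (hu : IsRegularSolution n k p ρ u) (hk1 : 1 < k) (hk2 : 2 * k < n)
    {r : ℝ} (hr : 0 < r) : deriv u r < 0 := by
  by_contra h
  push_neg at h
  have h2 : 0 ≤ flux n k u r := by
    apply mul_nonneg (mul_nonneg (pow_nonneg hr.le _) (pow_nonneg (abs_nonneg _) _)) h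
  exact absurd (aux_flux_neg hu hk1 hk2 hr) (not_lt.mpr h2)

lemma aux_neg_flux (hu : IsRegularSolution n k p ρ u) (hk1 : 1 < k) (hk2 : 2 * k < n)
    {r : ℝ} (hr : 0 < r) : -flux n k u r = r ^ (n - k) * |deriv u r| ^ k := by
  have hd := aux_deriv_neg hu hk1 hk2 hr
  have habs : |deriv u r| = -deriv u r := abs_of_neg hd
  have hk' : k - 1 + 1 = k := by omega
  rw [flux]
  calc -(r ^ (n-k) * |deriv u r| ^ (k-1) * deriv u r)
      = r ^ (n-k) * (|deriv u r| ^ (k-1) * -deriv u r) := by ring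
    _ = r ^ (n-k) * (|deriv u r| ^ (k-1) * |deriv u r|) := by rw [habs]
    _ = r ^ (n-k) * |deriv u r| ^ k := by rw [← pow_succ, hk']

lemma aux_u_anti (hu : IsRegularSolution n k p ρ u) (hk1 : 1 < k) (hk2 : 2 * k < n) :
    AntitoneOn u (Ici 0) := by
  apply antitoneOn_of_deriv_nonpos (convex_Ici 0) (aux_u_cont hu)
  · intro x hx
    rw [interior_Ici] at hx
    exact (aux_u_diffAt hu hx).differentiableWithinAt
  · intro x hx
    rw [interior_Ici] at hx
    exact (aux_deriv_neg hu hk1 hk2 hx).le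

lemma aux_F_lower (hu : IsRegularSolution n k p ρ u) (hn : 3 ≤ n) (hk1 : 1 < k)
    (hk2 : 2 * k < n) (hp0 : 0 ≤ p) {r : ℝ} (hr : 0 < r) :
    u r ^ p * (r ^ n / n) ≤ ∫ t in (0:ℝ)..r, t ^ (n - 1) * u t ^ p := by
  have hmono : ∀ t ∈ Icc (0:ℝ) r, t ^ (n-1) * u r ^ p ≤ t ^ (n-1) * u t ^ p := by
    intro t ht
    apply mul_le_mul_of_nonneg_left _ (pow_nonneg ht.1 _)
    have hur : u r ≤ u t := aux_u_anti hu hk1 hk2 ht.1 hr.le ht.2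
    exact Real.rpow_le_rpow (hu.pos r hr.le).le hur hp0
  have hint1 : IntervalIntegrable (fun t : ℝ => t ^ (n-1) * u r ^ p) volume 0 r :=
    (((continuous_pow (n-1)).mul continuous_const).intervalIntegrable 0 r)
  have h := intervalIntegral.integral_mono_on hr.le hint1 (aux_g2_intInt hu le_rfl hr.le) hmono
  refine le_trans (le_of_eq ?_) h
  rw [intervalIntegral.integral_mul_const, integral_pow]
  have h1 : n - 1 + 1 = n := by omega
  have h2 : ((n:ℝ) - 1) + 1 = (n:ℝ) := by ring
  rw [h1]
  have h3 : ((n - 1 : ℕ) : ℝ) + 1 = (n : ℝ) := by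
    have : (1:ℕ) ≤ n := by omega
    push_cast [Nat.cast_sub this]
    ring
  rw [h3]
  have hn0 : (0:ℝ) ^ n = 0 := by
    have : n ≠ 0 := by omega
    simp [zero_pow this]
  rw [hn0]
  ring

lemma aux_deriv_lower (hu : IsRegularSolution n k p ρ u) (hn : 3 ≤ n) (hk1 : 1 < k)
    (hk2 : 2 * k < n) (hp0 : 0 ≤ p) {r : ℝ} (hr : 0 < r) :
    ((k : ℝ) / binomC n k / n) * u r ^ p * r ^ k ≤ |deriv u r| ^ k := by
  set c : ℝ := (k : ℝ) / binomC n k with hc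
  have hc0 : 0 < c := aux_c_pos hk1 hk2
  have h1 : c * (u r ^ p * (r ^ n / n)) ≤ -flux n k u r := by
    rw [aux_flux_formula hu hk1 hk2 r hr.le, neg_mul, neg_neg]
    exact mul_le_mul_of_nonneg_left (aux_F_lower hu hn hk1 hk2 hp0 hr) hc0.le
  rw [aux_neg_flux hu hk1 hk2 hr] at h1
  have hsplit : r ^ n = r ^ k * r ^ (n - k) := by
    rw [← pow_add]
    congr 1
    omega
  have h2 : (c / n * u r ^ p * r ^ k) * r ^ (n - k) ≤ |deriv u r| ^ k * r ^ (n - k) := by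
    calc (c / n * u r ^ p * r ^ k) * r ^ (n - k) = c * (u r ^ p * (r ^ n / n)) := by
          rw [hsplit]; ring
      _ ≤ r ^ (n - k) * |deriv u r| ^ k := h1
      _ = |deriv u r| ^ k * r ^ (n - k) := by ring
  exact le_of_mul_le_mul_right h2 (pow_pos hr _)
lemma aux_nd_pos (hk2 : 2 * k < n) : 0 < (n:ℝ) - 2*k := by
  have : ((2*k : ℕ) : ℝ) < (n : ℝ) := by exact_mod_cast hk2
  push_cast at this
  linarith

lemma aux_p_gt_k (hk1 : 1 < k) (hk2 : 2 * k < n)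
    (hp1 : (n : ℝ) * k / ((n : ℝ) - 2 * k) < p) : (k : ℝ) < p := by
  have hd := aux_nd_pos hk2
  rw [div_lt_iff₀ hd] at hp1
  have hk0 : (1:ℝ) ≤ (k:ℝ) := by exact_mod_cast hk1.le
  nlinarith

lemma aux_p_pos (hk1 : 1 < k) (hk2 : 2 * k < n)
    (hp1 : (n : ℝ) * k / ((n : ℝ) - 2 * k) < p) : 0 < p :=
  lt_trans (by positivity) (aux_p_gt_k hk1 hk2 hp1)

lemma aux_deriv_lower' (hu : IsRegularSolution n k p ρ u) (hn : 3 ≤ n) (hk1 : 1 < k)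
    (hk2 : 2 * k < n) (hp0 : 0 ≤ p) {r : ℝ} (hr : 0 < r) :
    ((k : ℝ) / binomC n k / n) ^ ((k:ℝ)⁻¹) * u r ^ (p / k) * r ≤ |deriv u r| := by
  set β : ℝ := ((k : ℝ) / binomC n k / n) ^ ((k:ℝ)⁻¹) with hβ
  have hcn : (0:ℝ) < (k : ℝ) / binomC n k / n := by
    apply div_pos (aux_c_pos hk1 hk2)
    have : (0:ℕ) < n := by omega
    exact_mod_cast this
  have hβ0 : 0 ≤ β := Real.rpow_nonneg hcn.le _
  have hup : 0 < u r := hu.pos r hr.le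
  have hk0 : k ≠ 0 := by omega
  rw [← pow_le_pow_iff_left₀ (by positivity) (abs_nonneg _) hk0]
  calc (β * u r ^ (p / k) * r) ^ k
      = β ^ k * (u r ^ (p / k)) ^ k * r ^ k := by rw [mul_pow, mul_pow]
    _ = ((k : ℝ) / binomC n k / n) * u r ^ p * r ^ k := by
        congr 1
        congr 1
        · exact Real.rpow_inv_natCast_pow hcn.le hk0
        · rw [← Real.rpow_natCast (u r ^ (p/k)) k, ← Real.rpow_mul hup.le]
          congr 1
          field_simp
    _ ≤ |deriv u r| ^ k := aux_deriv_lower hu hn hk1 hk2 hp0 hr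

lemma aux_decay (hu : IsRegularSolution n k p ρ u) (hn : 3 ≤ n) (hk1 : 1 < k)
    (hk2 : 2 * k < n) (hρ : 0 < ρ)
    (hp1 : (n : ℝ) * k / ((n : ℝ) - 2 * k) < p) :
    ∃ C : ℝ, 0 < C ∧ ∀ r : ℝ, 0 < r → u r ≤ C * r ^ (-(2/(p/(k:ℝ)-1))) := by
  set α : ℝ := p/(k:ℝ) - 1 with hα
  have hk0 : (0:ℝ) < k := by exact_mod_cast (by omega : 0 < k)
  have hpk := aux_p_gt_k hk1 hk2 hp1
  have hp0 := (aux_p_pos hk1 hk2 hp1).le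
  have hα0 : 0 < α := sub_pos.mpr ((one_lt_div hk0).mpr hpk)
  set β : ℝ := ((k : ℝ) / binomC n k / n) ^ ((k:ℝ)⁻¹) with hβ
  have hcn : (0:ℝ) < (k : ℝ) / binomC n k / n :=
    div_pos (aux_c_pos hk1 hk2) (by exact_mod_cast (by omega : 0 < n))
  have hβ0 : 0 < β := Real.rpow_pos_of_pos hcn _
  set D : ℝ := α * β / 2 with hD
  have hD0 : 0 < D := by positivity
  set h : ℝ → ℝ := fun r => u r ^ (-α) - D * r ^ 2 with hh
  have hder : ∀ x : ℝ, 0 < x →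
      HasDerivAt h (-α * u x ^ (-α-1) * deriv u x - D * (2*x)) x := by
    intro x hx
    have h1 : HasDerivAt (fun r => u r ^ (-α)) (-α * u x ^ (-α-1) * deriv u x) x := by
      have := (aux_u_hasDeriv hu hx).rpow_const (p := -α) (Or.inl (hu.pos x hx.le).ne')
      convert this using 1
      ring
    have h2 : HasDerivAt (fun r : ℝ => D * r ^ 2) (D * (2*x)) x := by
      simpa using ((hasDerivAt_pow 2 x).const_mul D)
    exact h1.sub h2
  have hmono : MonotoneOn h (Ici 0) := by
    apply monotoneOn_of_deriv_nonneg (convex_Ici 0)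
    · exact ((aux_u_cont hu).rpow_const (fun x hx => Or.inl (hu.pos x hx).ne')).sub
        ((continuous_const.mul (continuous_pow 2)).continuousOn)
    · intro x hx
      rw [interior_Ici] at hx
      exact (hder x hx).differentiableAt.differentiableWithinAt
    · intro x hx
      rw [interior_Ici] at hx
      rw [(hder x hx).deriv]
      have hd := aux_deriv_neg hu hk1 hk2 hx
      have habs : -deriv u x = |deriv u x| := (abs_of_neg hd).symm
      have hup := hu.pos x hx.le
      have hlow := aux_deriv_lower' hu hn hk1 hk2 hp0 hx
      have h4 : u x ^ (-α-1) * u x ^ (p/(k:ℝ)) = 1 := by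
        rw [← Real.rpow_add hup]
        have he : -α-1 + p/(k:ℝ) = 0 := by rw [hα]; ring
        rw [he, Real.rpow_zero]
      have key : α * β * x ≤ -α * u x ^ (-α-1) * deriv u x := by
        have h3 : u x ^ (-α-1) * (β * u x ^ (p/(k:ℝ)) * x)
            ≤ u x ^ (-α-1) * |deriv u x| :=
          mul_le_mul_of_nonneg_left hlow (Real.rpow_nonneg hup.le _)
        calc α * β * x
            = α * (u x ^ (-α-1) * (β * u x ^ (p/(k:ℝ)) * x)) := by
              rw [show u x ^ (-α-1) * (β * u x ^ (p/(k:ℝ)) * x)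
                  = (u x ^ (-α-1) * u x ^ (p/(k:ℝ))) * (β * x) by ring, h4]
              ring
          _ ≤ α * (u x ^ (-α-1) * |deriv u x|) := mul_le_mul_of_nonneg_left h3 hα0.le
          _ = -α * u x ^ (-α-1) * deriv u x := by rw [← habs]; ring
      have hD2 : D * (2*x) = α * β * x := by rw [hD]; ring
      rw [hD2]
      linarith
  have hbound : ∀ r : ℝ, 0 ≤ r → D * r ^ 2 ≤ u r ^ (-α) := by
    intro r hr
    have hle := hmono self_mem_Ici hr hr
    have h00 : h 0 = u 0 ^ (-α) := by simp [hh]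
    have hρα : 0 < u 0 ^ (-α) := Real.rpow_pos_of_pos (hu.pos 0 le_rfl) _
    rw [h00] at hle
    have : h r = u r ^ (-α) - D * r ^ 2 := rfl
    rw [this] at hle
    linarith
  refine ⟨D ^ (-α⁻¹), Real.rpow_pos_of_pos hD0 _, ?_⟩
  intro r hr
  have hb := hbound r hr.le
  have hur := hu.pos r hr.le
  have h1 : (u r ^ (-α)) ^ (-α⁻¹) ≤ (D * r ^ 2) ^ (-α⁻¹) :=
    Real.rpow_le_rpow_of_nonpos (by positivity) hb (by simp [hα0.le, inv_nonneg.mpr hα0.le])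
  have h2 : (u r ^ (-α)) ^ (-α⁻¹) = u r := by
    rw [← Real.rpow_mul hur.le, neg_mul_neg, mul_inv_cancel₀ hα0.ne', Real.rpow_one]
  have h3 : (D * r ^ 2) ^ (-α⁻¹) = D ^ (-α⁻¹) * r ^ (-(2/α)) := by
    rw [Real.mul_rpow hD0.le (by positivity)]
    congr 1
    rw [← Real.rpow_natCast r 2, ← Real.rpow_mul hr.le]
    congr 1
    push_cast
    rw [div_eq_mul_inv]
    ring
  rw [h2, h3] at h1
  exact h1
lemma aux_exp1 (hk1 : 1 < k) (hk2 : 2 * k < n)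
    (hp1 : (n : ℝ) * k / ((n : ℝ) - 2 * k) < p) :
    2 * p / (p/(k:ℝ) - 1) < n := by
  have hd := aux_nd_pos hk2
  have hk0 : (0:ℝ) < k := by exact_mod_cast (by omega : 0 < k)
  have hα0 : 0 < p/(k:ℝ) - 1 :=
    sub_pos.mpr ((one_lt_div hk0).mpr (aux_p_gt_k hk1 hk2 hp1))
  rw [div_lt_iff₀ hd] at hp1
  rw [div_lt_iff₀ hα0]
  have hq : p/(k:ℝ) * k = p := div_mul_cancel₀ p hk0.ne'
  nlinarith [hp1, hk0, hq, mul_pos hk0 hk0]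

lemma aux_exp2 (hk1 : 1 < k) (hk2 : 2 * k < n)
    (hp1 : (n : ℝ) * k / ((n : ℝ) - 2 * k) < p)
    (hp2 : p < ((n : ℝ) + 2) * k / ((n : ℝ) - 2 * k)) :
    (n:ℝ) < 2 * (p + 1) / (p/(k:ℝ) - 1) := by
  have hd := aux_nd_pos hk2
  have hk0 : (0:ℝ) < k := by exact_mod_cast (by omega : 0 < k)
  have hα0 : 0 < p/(k:ℝ) - 1 :=
    sub_pos.mpr ((one_lt_div hk0).mpr (aux_p_gt_k hk1 hk2 hp1))
  rw [lt_div_iff₀ hd] at hp2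
  rw [lt_div_iff₀ hα0]
  have hq : p/(k:ℝ) * k = p := div_mul_cancel₀ p hk0.ne'
  nlinarith [hp2, hk0, hq, mul_pos hk0 hk0]

lemma aux_g2_integrable (hu : IsRegularSolution n k p ρ u) (hn : 3 ≤ n) (hk1 : 1 < k)
    (hk2 : 2 * k < n) (hρ : 0 < ρ)
    (hp1 : (n : ℝ) * k / ((n : ℝ) - 2 * k) < p)
    (hp2 : p < ((n : ℝ) + 2) * k / ((n : ℝ) - 2 * k)) :
    IntegrableOn (fun r : ℝ => r ^ (n - 1) * u r ^ (p + 1)) (Ioi 0) := by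
  obtain ⟨C, hC, hdecay⟩ := aux_decay hu hn hk1 hk2 hρ hp1
  set α : ℝ := p/(k:ℝ) - 1 with hα
  have hk0 : (0:ℝ) < k := by exact_mod_cast (by omega : 0 < k)
  have hα0 : 0 < α :=
    sub_pos.mpr ((one_lt_div hk0).mpr (aux_p_gt_k hk1 hk2 hp1))
  have hp0 : 0 < p := aux_p_pos hk1 hk2 hp1
  set e : ℝ := -(2/α) with he
  have part1 : IntegrableOn (fun r : ℝ => r ^ (n - 1) * u r ^ (p + 1)) (Ioc 0 1) := by
    have hc : ContinuousOn (fun r : ℝ => r ^ (n - 1) * u r ^ (p + 1)) (Icc 0 1) :=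
      (aux_g2_cont hu).mono (Icc_subset_Ici_self)
    exact (hc.integrableOn_compact isCompact_Icc).mono_set Ioc_subset_Icc_self
  have hexp : ((n:ℝ) - 1) + e * (p + 1) < -1 := by
    have h2 := aux_exp2 hk1 hk2 hp1 hp2
    have : e * (p+1) = -(2*(p+1)/α) := by rw [he]; ring
    rw [this]
    linarith
  have part2 : IntegrableOn (fun r : ℝ => r ^ (n - 1) * u r ^ (p + 1)) (Ioi 1) := by
    apply Integrable.mono'
      (g := fun r : ℝ => C ^ (p+1) * r ^ (((n:ℝ) - 1) + e * (p + 1)))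
    · exact (integrableOn_Ioi_rpow_of_lt hexp zero_lt_one).const_mul _
    · exact ((aux_g2_cont hu).mono (fun x hx => le_of_lt (lt_trans zero_lt_one (mem_Ioi.mp hx)))
        ).aestronglyMeasurable measurableSet_Ioi
    · filter_upwards [ae_restrict_mem measurableSet_Ioi] with r hr
      have hr1 : (1:ℝ) < r := hr
      have hr0 : (0:ℝ) < r := lt_trans zero_lt_one hr1
      have hnn : 0 ≤ r ^ (n-1) * u r ^ (p+1) :=
        mul_nonneg (pow_nonneg hr0.le _) (Real.rpow_nonneg (hu.pos r hr0.le).le _)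
      rw [Real.norm_of_nonneg hnn]
      have hb1 : u r ^ (p+1) ≤ (C * r ^ e) ^ (p+1) :=
        Real.rpow_le_rpow (hu.pos r hr0.le).le (hdecay r hr0) (by linarith)
      have hb2 : (C * r ^ e) ^ (p+1) = C ^ (p+1) * r ^ (e * (p+1)) := by
        rw [Real.mul_rpow hC.le (Real.rpow_nonneg hr0.le _), ← Real.rpow_mul hr0.le]
      have hb3 : (r:ℝ) ^ (n-1) * r ^ (e * (p+1)) = r ^ (((n:ℝ) - 1) + e * (p+1)) := by
        rw [← Real.rpow_natCast r (n-1), ← Real.rpow_add hr0]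
        congr 2
        have : (1:ℕ) ≤ n := by omega
        push_cast [Nat.cast_sub this]
        ring
      calc r ^ (n-1) * u r ^ (p+1) ≤ r ^ (n-1) * (C ^ (p+1) * r ^ (e * (p+1))) := by
            rw [← hb2]
            exact mul_le_mul_of_nonneg_left hb1 (pow_nonneg hr0.le _)
        _ = C ^ (p+1) * (r ^ (n-1) * r ^ (e * (p+1))) := by ring
        _ = C ^ (p+1) * r ^ (((n:ℝ) - 1) + e * (p+1)) := by rw [hb3]
  have hun : Ioc (0:ℝ) 1 ∪ Ioi 1 = Ioi 0 := Ioc_union_Ioi_eq_Ioi zero_le_one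
  rw [← hun]
  exact part1.union part2
lemma aux_g1_Ioc (hu : IsRegularSolution n k p ρ u) (b : ℝ) :
    IntegrableOn (fun r : ℝ => r ^ (n - k) * |deriv u r| ^ (k + 1)) (Ioc 0 b) := by
  rcases le_or_gt b 0 with hb | hb
  · rw [Ioc_eq_empty (by exact not_lt.mpr hb)]
    exact integrableOn_empty
  · have hcont : ContinuousOn
        (fun r : ℝ => r ^ (n - k) * |derivWithin u (Ici 0) r| ^ (k + 1)) (Icc 0 b) :=
      (continuous_pow _).continuousOn.mul
        ((((aux_v_cont hu).mono Icc_subset_Ici_self).abs).pow _)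
    have hint := (hcont.integrableOn_compact (μ := volume) isCompact_Icc).mono_set Ioc_subset_Icc_self
    apply hint.congr_fun _ measurableSet_Ioc
    intro r hr
    simp only
    rw [aux_deriv_eq hr.1]

lemma aux_g1_intInt (hu : IsRegularSolution n k p ρ u) {R : ℝ} (hR : 0 ≤ R) :
    IntervalIntegrable (fun r : ℝ => r ^ (n - k) * |deriv u r| ^ (k + 1)) volume 0 R := by
  rw [intervalIntegrable_iff_integrableOn_Ioc_of_le hR]
  exact aux_g1_Ioc hu R

lemma aux_ibp (hu : IsRegularSolution n k p ρ u) (hn : 3 ≤ n) (hk1 : 1 < k)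
    (hk2 : 2 * k < n) {R : ℝ} (hR : 0 < R) :
    ∫ r in (0:ℝ)..R, r ^ (n - k) * |deriv u r| ^ (k + 1)
      = ((k:ℝ)/binomC n k) * (∫ r in (0:ℝ)..R, r ^ (n - 1) * u r ^ (p + 1))
        + u R * flux n k u R := by
  set c : ℝ := (k:ℝ)/binomC n k with hc
  set f' : ℝ → ℝ := fun r => r ^ (n - k) * |deriv u r| ^ (k + 1)
      - c * (r ^ (n - 1) * u r ^ (p + 1)) with hf'
  have key : ∫ r in (0:ℝ)..R, f' r = u R * flux n k u R - u 0 * flux n k u 0 := by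
    apply intervalIntegral.integral_eq_sub_of_hasDeriv_right_of_le hR.le
    · exact ((aux_u_cont hu).mono Icc_subset_Ici_self).mul
        ((aux_flux_cont hu hk1 hk2).mono Icc_subset_Ici_self)
    · intro x hx
      have hx0 : 0 < x := hx.1
      have hP := (aux_u_hasDeriv hu hx0).mul (hu.eqn x hx0)
      have hval : deriv u x * flux n k u x
          + u x * (-c * x ^ (n-1) * u x ^ p) = f' x := by
        have hd2 : deriv u x * flux n k u x = x ^ (n-k) * |deriv u x| ^ (k+1) := by
          rw [flux]
          have : deriv u x * (x ^ (n-k) * |deriv u x| ^ (k-1) * deriv u x)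
              = x ^ (n-k) * (|deriv u x| ^ (k-1) * (deriv u x) ^ 2) := by ring
          rw [this, ← sq_abs, ← pow_add]
          congr 2
          omega
        have hu2 : u x * (-c * x ^ (n-1) * u x ^ p)
            = -(c * (x ^ (n-1) * u x ^ (p+1))) := by
          rw [Real.rpow_add_one (hu.pos x hx0.le).ne']
          ring
        rw [hd2, hu2, hf']
        ring
      rw [hval] at hP
      exact hP.hasDerivWithinAt.mono (fun y hy => le_of_lt (mem_Ioi.mp hy))
    · exact (aux_g1_intInt hu hR.le).sub ((aux_g2_intInt hu le_rfl hR.le).const_mul c)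
  have hfl0 : flux n k u 0 = 0 := by
    have hnk : n - k ≠ 0 := by omega
    simp [flux, zero_pow hnk]
  rw [hfl0, mul_zero, sub_zero] at key
  have hsplit : ∫ r in (0:ℝ)..R, f' r
      = (∫ r in (0:ℝ)..R, r ^ (n - k) * |deriv u r| ^ (k + 1))
        - c * ∫ r in (0:ℝ)..R, r ^ (n - 1) * u r ^ (p + 1) := by
    rw [hf', intervalIntegral.integral_sub (aux_g1_intInt hu hR.le)
      ((aux_g2_intInt hu le_rfl hR.le).const_mul c),
      intervalIntegral.integral_const_mul]
  rw [hsplit] at key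
  linarith
lemma aux_boundary (hu : IsRegularSolution n k p ρ u) (hn : 3 ≤ n) (hk1 : 1 < k)
    (hk2 : 2 * k < n) (hρ : 0 < ρ)
    (hp1 : (n : ℝ) * k / ((n : ℝ) - 2 * k) < p)
    (hp2 : p < ((n : ℝ) + 2) * k / ((n : ℝ) - 2 * k)) :
    Tendsto (fun R => u R * flux n k u R) atTop (𝓝 0) := by
  obtain ⟨C, hC, hdecay⟩ := aux_decay hu hn hk1 hk2 hρ hp1
  set α : ℝ := p/(k:ℝ) - 1 with hα
  have hk0 : (0:ℝ) < k := by exact_mod_cast (by omega : 0 < k)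
  have hα0 : 0 < α := sub_pos.mpr ((one_lt_div hk0).mpr (aux_p_gt_k hk1 hk2 hp1))
  have hp0 : 0 < p := aux_p_pos hk1 hk2 hp1
  set e : ℝ := -(2/α) with he
  set γ : ℝ := (n:ℝ) - 1 + e * p with hγdef
  have hγ : -1 < γ := by
    have h1 := aux_exp1 hk1 hk2 hp1
    have : e * p = -(2*p/α) := by rw [he]; ring
    rw [hγdef, this]
    linarith
  have hγ1 : 0 < γ + 1 := by linarith
  have hδ : e + (γ + 1) < 0 := by
    have h2 := aux_exp2 hk1 hk2 hp1 hp2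
    have h3 : e + (γ + 1) = (n:ℝ) - 2*(p+1)/α := by rw [hγdef, he]; ring
    rw [h3]
    have : 2*(p+1)/α = 2*p/α + 2/α := by ring
    linarith
  set F : ℝ → ℝ := fun R => ∫ t in (0:ℝ)..R, t ^ (n - 1) * u t ^ p with hF
  set F1 : ℝ := F 1 with hF1
  -- main squeeze for u R * F R
  have hT : Tendsto (fun R => u R * F R) atTop (𝓝 0) := by
    set b : ℝ → ℝ := fun R => C * F1 * R ^ e + C ^ (p+1) / (γ+1) * R ^ (e + (γ+1))
      with hb
    have hb0 : Tendsto b atTop (𝓝 0) := by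
      have t1 : Tendsto (fun R : ℝ => C * F1 * R ^ e) atTop (𝓝 0) := by
        rw [he]
        have := (tendsto_rpow_neg_atTop (by positivity : (0:ℝ) < 2/α)).const_mul (C * F1)
        simpa using this
      have t2 : Tendsto (fun R : ℝ => C ^ (p+1) / (γ+1) * R ^ (e + (γ+1))) atTop (𝓝 0) := by
        have h4 : e + (γ+1) = -(-(e + (γ+1))) := by ring
        rw [h4]
        have := (tendsto_rpow_neg_atTop (by linarith : (0:ℝ) < -(e + (γ+1)))).const_mul
          (C ^ (p+1) / (γ+1))
        simpa using this
      simpa using t1.add t2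
    apply tendsto_of_tendsto_of_tendsto_of_le_of_le' tendsto_const_nhds hb0
    · filter_upwards [eventually_ge_atTop (1:ℝ)] with R hR1
      have hR0 : (0:ℝ) < R := lt_of_lt_of_le zero_lt_one hR1
      exact mul_nonneg (hu.pos R hR0.le).le
        (le_of_lt (aux_F_pos hu hR0))
    · filter_upwards [eventually_ge_atTop (1:ℝ)] with R hR1
      have hR0 : (0:ℝ) < R := lt_of_lt_of_le zero_lt_one hR1
      have hsplit : F R = F1 + ∫ t in (1:ℝ)..R, t ^ (n - 1) * u t ^ p := by
        rw [hF1, hF]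
        exact (intervalIntegral.integral_add_adjacent_intervals
          (aux_g2_intInt hu le_rfl zero_le_one)
          (aux_g2_intInt hu zero_le_one hR0.le)).symm
      have htail : ∫ t in (1:ℝ)..R, t ^ (n - 1) * u t ^ p
          ≤ C ^ p * ((R ^ (γ+1) - 1)/(γ+1)) := by
        have hpt : ∀ t ∈ Icc (1:ℝ) R, t ^ (n - 1) * u t ^ p ≤ C ^ p * t ^ γ := by
          intro t ht
          have ht0 : (0:ℝ) < t := lt_of_lt_of_le zero_lt_one ht.1
          have hb1 : u t ^ p ≤ (C * t ^ e) ^ p :=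
            Real.rpow_le_rpow (hu.pos t ht0.le).le (hdecay t ht0) hp0.le
          have hb2 : (C * t ^ e) ^ p = C ^ p * t ^ (e * p) := by
            rw [Real.mul_rpow hC.le (Real.rpow_nonneg ht0.le _), ← Real.rpow_mul ht0.le]
          have hb3 : (t:ℝ) ^ (n-1) * t ^ (e * p) = t ^ γ := by
            rw [← Real.rpow_natCast t (n-1), ← Real.rpow_add ht0, hγdef]
            congr 1
            have : (1:ℕ) ≤ n := by omega
            push_cast [Nat.cast_sub this]
            ring
          calc t ^ (n-1) * u t ^ p ≤ t ^ (n-1) * (C ^ p * t ^ (e * p)) := by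
                rw [← hb2]
                exact mul_le_mul_of_nonneg_left hb1 (pow_nonneg ht0.le _)
            _ = C ^ p * (t ^ (n-1) * t ^ (e * p)) := by ring
            _ = C ^ p * t ^ γ := by rw [hb3]
        have hint2 : IntervalIntegrable (fun t : ℝ => C ^ p * t ^ γ) volume 1 R := by
          apply ContinuousOn.intervalIntegrable
          apply continuousOn_const.mul
          apply ContinuousOn.rpow_const continuousOn_id
          intro t ht
          have : (0:ℝ) < t := lt_of_lt_of_le zero_lt_one (le_trans (le_min le_rfl hR1) ht.1)
          exact Or.inl this.ne'
        have := intervalIntegral.integral_mono_on hR1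
          (aux_g2_intInt hu zero_le_one hR0.le) hint2 hpt
        rw [intervalIntegral.integral_const_mul, integral_rpow (Or.inl hγ),
          Real.one_rpow] at this
        exact this
      calc u R * F R ≤ (C * R ^ e) * F R := by
            apply mul_le_mul_of_nonneg_right (hdecay R hR0) (le_of_lt (aux_F_pos hu hR0))
        _ ≤ (C * R ^ e) * (F1 + C ^ p * (R ^ (γ+1)/(γ+1))) := by
            apply mul_le_mul_of_nonneg_left _ (by positivity)
            rw [hsplit]
            have h5 : C ^ p * ((R ^ (γ+1) - 1)/(γ+1)) ≤ C ^ p * (R ^ (γ+1)/(γ+1)) := by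
              apply mul_le_mul_of_nonneg_left _ (Real.rpow_nonneg hC.le _)
              exact (div_le_div_iff_of_pos_right hγ1).mpr (by linarith)
            linarith [htail, h5]
        _ ≤ b R := by
            apply le_of_eq
            show _ = C * F1 * R ^ e + C ^ (p + 1) / (γ + 1) * R ^ (e + (γ + 1))
            have h6 : R ^ (e + (γ+1)) = R ^ e * R ^ (γ+1) := Real.rpow_add hR0 _ _
            have h7 : C ^ (p+1) = C ^ p * C := Real.rpow_add_one hC.ne' p
            rw [h6, h7]
            ring
  -- conclude
  have hfinal : Tendsto (fun R => -(((k:ℝ)/binomC n k) * (u R * F R))) atTop (𝓝 0) := by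
    simpa using ((hT.const_mul ((k:ℝ)/binomC n k)).neg)
  apply hfinal.congr'
  filter_upwards [eventually_gt_atTop (0:ℝ)] with R hR
  rw [aux_flux_formula hu hk1 hk2 R hR.le, hF]
  ring
lemma aux_g1_integrable (hu : IsRegularSolution n k p ρ u) (hn : 3 ≤ n) (hk1 : 1 < k)
    (hk2 : 2 * k < n) (hρ : 0 < ρ)
    (hp1 : (n : ℝ) * k / ((n : ℝ) - 2 * k) < p)
    (hp2 : p < ((n : ℝ) + 2) * k / ((n : ℝ) - 2 * k)) :
    IntegrableOn (fun r : ℝ => r ^ (n - k) * |deriv u r| ^ (k + 1)) (Ioi 0) := by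
  set c : ℝ := (k:ℝ)/binomC n k with hc
  have hc0 : 0 < c := aux_c_pos hk1 hk2
  have hI := aux_g2_integrable hu hn hk1 hk2 hρ hp1 hp2
  set I : ℝ := ∫ r in Ioi (0:ℝ), r ^ (n - 1) * u r ^ (p + 1) with hIdef
  apply MeasureTheory.integrableOn_Ioi_of_intervalIntegral_norm_bounded (c * I) 0
    (fun i => aux_g1_Ioc hu i) (tendsto_id (x := atTop))
  filter_upwards [eventually_gt_atTop (0:ℝ)] with R hR
  have hnorm : ∫ x in (0:ℝ)..R, ‖x ^ (n - k) * |deriv u x| ^ (k + 1)‖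
      = ∫ x in (0:ℝ)..R, x ^ (n - k) * |deriv u x| ^ (k + 1) := by
    apply intervalIntegral.integral_congr
    intro x hx
    rw [uIcc_of_le hR.le] at hx
    exact Real.norm_of_nonneg (mul_nonneg (pow_nonneg hx.1 _) (pow_nonneg (abs_nonneg _) _))
  rw [hnorm, aux_ibp hu hn hk1 hk2 hR]
  have hbd : u R * flux n k u R ≤ 0 :=
    le_of_lt (mul_neg_of_pos_of_neg (hu.pos R hR.le) (aux_flux_neg hu hk1 hk2 hR))
  have hJ : ∫ r in (0:ℝ)..R, r ^ (n - 1) * u r ^ (p + 1) ≤ I := by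
    rw [intervalIntegral.integral_of_le hR.le, hIdef]
    apply setIntegral_mono_set hI
    · filter_upwards [ae_restrict_mem measurableSet_Ioi] with r hr
      exact mul_nonneg (pow_nonneg (le_of_lt hr) _)
        (Real.rpow_nonneg (hu.pos r (le_of_lt hr)).le _)
    · exact HasSubset.Subset.eventuallyLE Ioc_subset_Ioi_self
  nlinarith [mul_le_mul_of_nonneg_left hJ hc0.le]


/-- the energy identity for regular solutions when `p_se < p < p_so`. -/
theorem energy_identity (n k : ℕ) (p ρ : ℝ) (u : ℝ → ℝ)
    (hn : 3 ≤ n) (hk1 : 1 < k) (hk2 : 2 * k < n) (hρ : 0 < ρ)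
    (hp1 : (n : ℝ) * k / ((n : ℝ) - 2 * k) < p)
    (hp2 : p < ((n : ℝ) + 2) * k / ((n : ℝ) - 2 * k))
    (hu : IsRegularSolution n k p ρ u) :
    IntegrableOn (fun r : ℝ => r ^ (n - k) * |deriv u r| ^ (k + 1)) (Ioi 0) ∧
    IntegrableOn (fun r : ℝ => r ^ (n - 1) * u r ^ (p + 1)) (Ioi 0) ∧
    ∫ r in Ioi (0 : ℝ), r ^ (n - k) * |deriv u r| ^ (k + 1)
      = ((k : ℝ) / binomC n k) * ∫ r in Ioi (0 : ℝ), r ^ (n - 1) * u r ^ (p + 1) := by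
  have hg1 := aux_g1_integrable hu hn hk1 hk2 hρ hp1 hp2
  have hg2 := aux_g2_integrable hu hn hk1 hk2 hρ hp1 hp2
  refine ⟨hg1, hg2, ?_⟩
  have t1 : Tendsto (fun R : ℝ => ∫ r in (0:ℝ)..R, r ^ (n - k) * |deriv u r| ^ (k + 1))
      atTop (𝓝 (∫ r in Ioi (0:ℝ), r ^ (n - k) * |deriv u r| ^ (k + 1))) :=
    MeasureTheory.intervalIntegral_tendsto_integral_Ioi 0 hg1 tendsto_id
  have t2 : Tendsto (fun R : ℝ => ((k:ℝ)/binomC n k)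
        * (∫ r in (0:ℝ)..R, r ^ (n - 1) * u r ^ (p + 1)) + u R * flux n k u R)
      atTop (𝓝 (((k:ℝ)/binomC n k) * (∫ r in Ioi (0:ℝ), r ^ (n - 1) * u r ^ (p + 1)) + 0)) :=
    ((MeasureTheory.intervalIntegral_tendsto_integral_Ioi 0 hg2 tendsto_id).const_mul _).add
      (aux_boundary hu hn hk1 hk2 hρ hp1 hp2)
  have heq : (fun R : ℝ => ∫ r in (0:ℝ)..R, r ^ (n - k) * |deriv u r| ^ (k + 1))
      =ᶠ[atTop] (fun R : ℝ => ((k:ℝ)/binomC n k)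
        * (∫ r in (0:ℝ)..R, r ^ (n - 1) * u r ^ (p + 1)) + u R * flux n k u R) := by
    filter_upwards [eventually_gt_atTop (0:ℝ)] with R hR
    exact aux_ibp hu hn hk1 hk2 hR
  have := tendsto_nhds_unique (t1.congr' heq) t2
  rw [this, add_zero]


end KHessianPaper
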